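/- Suppose λ is a regular uncountable cardinal and □(λ) holds. Then for every nontrivial abelian group A there exists a nontrivial coherent family {φ_α : α → A | α < λ}. -/

import Mathlib

noncomputable section
open Ordinal Set

/-- `Φ` codes a coherent family of functions `φ_β = Φ β : β → A` (`β < δ`):
`φ_γ ↾ β =* φ_β` (agreement at all but finitely many arguments) for all `β ≤ γ < δ`. -/
def CoherentFam {A : Type*} (δ : Ordinal.{0}) (Φ : Ordinal.{0} → Ordinal.{0} → A) : Prop :=
  ∀ β γ, β ≤ γ → γ < δ → {α : Ordinal | α < β ∧ Φ γ α ≠ Φ β α}.Finite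

/-- The family coded by `Φ` is trivial: some `f : δ → A` satisfies `f ↾ β =* φ_β`
for all `β < δ`. -/
def TrivialFam {A : Type*} (δ : Ordinal.{0}) (Φ : Ordinal.{0} → Ordinal.{0} → A) : Prop :=
  ∃ f : Ordinal → A, ∀ β, β < δ → {α : Ordinal | α < β ∧ f α ≠ Φ β α}.Finite

/-- `D` is closed and unbounded (club) in the ordinal `L`. -/
def IsClubIn (D : Set Ordinal.{0}) (L : Ordinal.{0}) : Prop :=
  D ⊆ Set.Iio L ∧ (∀ α, α < L → 0 < α → sSup (D ∩ Set.Iio α) = α → α ∈ D) ∧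
    ∀ α, α < L → ∃ β ∈ D, α ≤ β

/-- `S` is a stationary subset of the ordinal `L`. -/
def IsStationaryIn (S : Set Ordinal.{0}) (L : Ordinal.{0}) : Prop :=
  S ⊆ Set.Iio L ∧ ∀ D, IsClubIn D L → (S ∩ D).Nonempty

/-- `C` is a `□(L)`-sequence: `C α` is club in `α` for limit `α < L`, the sequence is
coherent (`C β ∩ α = C α` whenever `α` is a limit point of `C β`), and there is no single
club `D ⊆ L` threading it (`D ∩ α = C α` for every limit point `α < L` of `D`). -/
def IsSquareSeq (L : Ordinal.{0}) (C : Ordinal.{0} → Set Ordinal.{0}) : Prop :=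
  (∀ α, α < L → Order.IsSuccLimit α → IsClubIn (C α) α) ∧
  (∀ α β, α < β → β < L → Order.IsSuccLimit α → Order.IsSuccLimit β →
    sSup (C β ∩ Set.Iio α) = α → C β ∩ Set.Iio α = C α) ∧
  ¬∃ D : Set Ordinal, IsClubIn D L ∧
    ∀ α, α < L → Order.IsSuccLimit α → sSup (D ∩ Set.Iio α) = α → D ∩ Set.Iio α = C α

namespace Sq18
open Classical

/-! ### Nat coding -/

def mfun (t K : ℕ) : ℕ := t + 2^(2^t * (2*K+1))

lemma exp_ge (s : ℕ) : s + 1 ≤ 2^s := by have := s.lt_two_pow_self; omega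

lemma mfun_inj {t K s L : ℕ} (h : mfun t K = mfun s L) : t = s ∧ K = L := by
  unfold mfun at h
  have key : ∀ t' s' i' j' : ℕ, t' ≤ s' → 2^s' ≤ j' → t' + 2^i' = s' + 2^j' → i' = j' := by
    intro t' s' i' j' hts hj' heq
    rcases lt_trichotomy i' j' with h1 | h1 | h1
    · exfalso
      have h2 : (2:ℕ)^i' < 2^j' := Nat.pow_lt_pow_right one_lt_two h1
      omega
    · exact h1
    · exfalso
      have h2 : (2:ℕ)^(j'+1) ≤ 2^i' := Nat.pow_le_pow_right (by norm_num) h1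
      rw [pow_succ] at h2
      have e1 := exp_ge j'
      have e2 := exp_ge s'
      omega
  have hij : 2^t * (2*K+1) = 2^s * (2*L+1) := by
    have hb1 : (2:ℕ)^t ≤ 2^t * (2*K+1) := Nat.le_mul_of_pos_right _ (by omega)
    have hb2 : (2:ℕ)^s ≤ 2^s * (2*L+1) := Nat.le_mul_of_pos_right _ (by omega)
    rcases le_total t s with hts | hts
    · exact key t s _ _ hts hb2 h
    · exact (key s t _ _ hts hb1 h.symm).symm
  have ht : t = s := by rw [hij] at h; omega
  subst ht
  have hKL : 2*K+1 = 2*L+1 :=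
    Nat.eq_of_mul_eq_mul_left (show 0 < 2^t from (by positivity)) hij
  exact ⟨rfl, by omega⟩

lemma mfun_ge (t K : ℕ) : t + 2 ≤ mfun t K := by
  unfold mfun
  have h1 : (1:ℕ) ≤ 2^t * (2*K+1) := Nat.one_le_iff_ne_zero.mpr (by positivity)
  have h2 : (2:ℕ)^1 ≤ 2^(2^t*(2*K+1)) := Nat.pow_le_pow_right (by norm_num) h1
  omega

/-! ### Ordinal position coding -/

def tfin (b : Ordinal.{0}) : ℕ :=
  (Ordinal.lt_omega0.mp (Ordinal.mod_lt b omega0_ne_zero)).choose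

lemma tfin_spec (b : Ordinal.{0}) : b % omega0 = (tfin b : Ordinal) :=
  (Ordinal.lt_omega0.mp (Ordinal.mod_lt b omega0_ne_zero)).choose_spec

def posn (b : Ordinal.{0}) (K : ℕ) : Ordinal.{0} :=
  omega0 * (b / omega0) + (mfun (tfin b) K : ℕ)

lemma posn_div (b : Ordinal.{0}) (K : ℕ) : posn b K / omega0 = b / omega0 := by
  unfold posn
  rw [Ordinal.mul_add_div _ omega0_ne_zero, Ordinal.div_eq_zero_of_lt (nat_lt_omega0 _), add_zero]

lemma posn_mod (b : Ordinal.{0}) (K : ℕ) : posn b K % omega0 = (mfun (tfin b) K : ℕ) := by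
  unfold posn
  rw [Ordinal.mul_add_mod_self, Ordinal.mod_eq_of_lt (nat_lt_omega0 _)]

lemma posn_inj {b b' : Ordinal.{0}} {K K' : ℕ} (h : posn b K = posn b' K') :
    b = b' ∧ K = K' := by
  have hdiv : b / omega0 = b' / omega0 := by
    rw [← posn_div b K, ← posn_div b' K', h]
  have hmod : (mfun (tfin b) K : Ordinal) = (mfun (tfin b') K' : Ordinal) := by
    rw [← posn_mod b K, ← posn_mod b' K', h]
  have hmodn : mfun (tfin b) K = mfun (tfin b') K' := by exact_mod_cast hmod
  obtain ⟨ht, hK⟩ := mfun_inj hmodn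
  constructor
  · have h1 := Ordinal.div_add_mod b omega0
    have h2 := Ordinal.div_add_mod b' omega0
    rw [tfin_spec] at h1 h2
    rw [← h1, ← h2, hdiv, ht]
  · exact hK

lemma le_posn (b : Ordinal.{0}) (K : ℕ) : b ≤ posn b K := by
  conv_lhs => rw [← Ordinal.div_add_mod b omega0]
  rw [tfin_spec]
  unfold posn
  apply add_le_add_right
  exact_mod_cast Nat.le_of_lt (by have := mfun_ge (tfin b) K; omega)

lemma posn_pos (b : Ordinal.{0}) (K : ℕ) : 0 < posn b K := by
  unfold posn
  have h1 : (0:Ordinal) < (mfun (tfin b) K : ℕ) := by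
    have := mfun_ge (tfin b) K
    exact_mod_cast Nat.pos_of_ne_zero (by omega)
  calc (0:Ordinal) < _ := h1
    _ ≤ _ := le_add_self

lemma add_nat_lt_of_limit {x α : Ordinal.{0}} (hα : Order.IsSuccLimit α) (hx : x < α) (n : ℕ) :
    x + n < α := by
  induction n with
  | zero => simpa using hx
  | succ m ih =>
      have : x + (m+1 : ℕ) = Order.succ (x + m) := by
        push_cast
        rw [← add_assoc]
        rfl
      rw [this]
      exact hα.succ_lt ih

lemma posn_lt {b α : Ordinal.{0}} (hα : Order.IsSuccLimit α) (hb : b < α) (K : ℕ) : posn b K < α := by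
  have h1 : omega0 * (b / omega0) ≤ b := Ordinal.mul_div_le b omega0
  have : posn b K ≤ b + (mfun (tfin b) K : ℕ) := by
    unfold posn
    exact add_le_add_left h1 _
  exact lt_of_le_of_lt this (add_nat_lt_of_limit hα hb _)

/-! ### sSup / sInf helpers -/

lemma bddAbove_of_subset_Iio {s : Set Ordinal.{0}} {α : Ordinal.{0}} (h : s ⊆ Iio α) :
    BddAbove s := ⟨α, fun _ hy => le_of_lt (h hy)⟩

lemma sSup_le_of_subset_Iio {s : Set Ordinal.{0}} {α : Ordinal.{0}} (h : s ⊆ Iio α) :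
    sSup s ≤ α := by
  rcases s.eq_empty_or_nonempty with rfl | hne
  · simp [csSup_empty, Ordinal.bot_eq_zero, zero_le]
  · exact csSup_le hne (fun y hy => le_of_lt (h hy))

lemma exists_gt_of_sSup_eq {s : Set Ordinal.{0}} {α x : Ordinal.{0}} (hsub : s ⊆ Iio α)
    (hsup : sSup s = α) (hx : x < α) : ∃ y ∈ s, x < y := by
  by_contra hcon
  push_neg at hcon
  rcases s.eq_empty_or_nonempty with rfl | hne
  · rw [csSup_empty, Ordinal.bot_eq_zero] at hsup
    exact absurd (hsup ▸ hx) (not_lt_of_ge (zero_le : (0:Ordinal) ≤ x))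
  · have h2 : sSup s ≤ x := csSup_le hne hcon
    exact absurd hx (not_lt.mpr (hsup ▸ h2))
  
lemma sSup_eq_of_cofinal {s : Set Ordinal.{0}} {α : Ordinal.{0}} (hsub : s ⊆ Iio α)
    (h : ∀ x, x < α → ∃ y ∈ s, x < y) : sSup s = α := by
  refine le_antisymm (sSup_le_of_subset_Iio hsub) ?_
  by_contra hcon
  push_neg at hcon
  obtain ⟨y, hy, hy2⟩ := h _ hcon
  exact absurd (le_csSup (bddAbove_of_subset_Iio hsub) hy) (not_le.mpr hy2)

/-! ### club helpers -/

lemma club_sup_mem {D : Set Ordinal.{0}} {β α : Ordinal.{0}} (hc : IsClubIn D β)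
    (hαβ : α ≤ β) (hne : (D ∩ Iio α).Nonempty) (hlt : sSup (D ∩ Iio α) < α) :
    sSup (D ∩ Iio α) ∈ D := by
  set η := sSup (D ∩ Iio α) with hη
  by_cases hmem : η ∈ D ∩ Iio α
  · exact hmem.1
  have hsub : D ∩ Iio α ⊆ Iio η := by
    intro y hy
    have h1 : y ≤ η := le_csSup (bddAbove_of_subset_Iio (fun z hz => hz.2)) hy
    rcases lt_or_eq_of_le h1 with h2 | h2
    · exact h2
    · exact absurd (h2 ▸ hy) hmem
  have hpos : 0 < η := by
    obtain ⟨y, hy⟩ := hne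
    have := hsub hy
    exact lt_of_le_of_lt (zero_le : (0:Ordinal) ≤ y) this
  have heq : D ∩ Iio η = D ∩ Iio α := by
    apply Set.eq_of_subset_of_subset
    · intro y hy; exact ⟨hy.1, lt_trans hy.2 hlt⟩
    · intro y hy; exact ⟨hy.1, hsub hy⟩
  apply hc.2.1 η (lt_of_lt_of_le hlt hαβ) hpos
  rw [heq]

lemma club_next {D : Set Ordinal.{0}} {β α : Ordinal.{0}} (hc : IsClubIn D β) (hαβ : α < β) :
    (D \ Iio α).Nonempty ∧ sInf (D \ Iio α) ∈ D ∧ α ≤ sInf (D \ Iio α) ∧ sInf (D \ Iio α) < β := by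
  obtain ⟨y, hy, hy2⟩ := hc.2.2 α hαβ
  have hne : (D \ Iio α).Nonempty := ⟨y, hy, not_lt.mpr hy2⟩
  have hmem := csInf_mem hne
  exact ⟨hne, hmem.1, not_lt.mp hmem.2, hc.1 hmem.1⟩

/-! ### the walk machinery -/

variable (C : Ordinal.{0} → Set Ordinal.{0})

def Ew (ν : Ordinal.{0}) : Set Ordinal.{0} := if Order.IsSuccLimit ν then C ν else {x | x + 1 = ν}

def Kf (b : Ordinal.{0}) : Ordinal.{0} → ℕ :=
  Ordinal.lt_wf.fix fun ν rec =>
    if h : sInf (Ew C ν \ Iio b) < ν then rec _ h + 1 else 0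

lemma Kf_eq (b ν : Ordinal.{0}) :
    Kf C b ν = if h : sInf (Ew C ν \ Iio b) < ν then Kf C b (sInf (Ew C ν \ Iio b)) + 1 else 0 :=
  WellFounded.fix_eq _ _ _

lemma Kf_step {b β γ : Ordinal.{0}} (hmem : γ ∈ Ew C β) (hbγ : b ≤ γ) (hγβ : γ < β)
    (hmin : ∀ y ∈ Ew C β, b ≤ y → γ ≤ y) : Kf C b β = Kf C b γ + 1 := by
  have hset : sInf (Ew C β \ Iio b) = γ := by
    refine le_antisymm (csInf_le' ⟨hmem, not_lt.mpr hbγ⟩) ?_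
    exact le_csInf ⟨γ, hmem, not_lt.mpr hbγ⟩ (fun y hy => hmin y hy.1 (not_lt.mp hy.2))
  rw [Kf_eq, hset, dif_pos hγβ]

def Tnxt (δ ξ : Ordinal.{0}) : Ordinal.{0} := sInf (C δ \ Iic ξ)

def bse (δ ξ : Ordinal.{0}) : Ordinal.{0} :=
  if (C δ ∩ Iio ξ).Nonempty then sSup (C δ ∩ Iio ξ) + 1 else 0

def Tset : Ordinal.{0} → Set Ordinal.{0} :=
  Ordinal.lt_wf.fix fun δ rec =>
    if hδ : Order.IsSuccLimit δ then
      {ξ | ξ < δ ∧ ξ ∉ C δ ∧ ∃ h : Tnxt C δ ξ < δ,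
        ((ξ ∈ rec (Tnxt C δ ξ) h) ↔ ξ ≠ posn (bse C δ ξ) (Kf C (bse C δ ξ) (Tnxt C δ ξ)))}
    else if hs : ∃ γ, δ = γ + 1 then
      rec hs.choose (by have h := lt_add_one hs.choose; rwa [← hs.choose_spec] at h)
    else ∅

lemma Tset_limit {δ : Ordinal.{0}} (hδ : Order.IsSuccLimit δ) (ξ : Ordinal.{0}) :
    ξ ∈ Tset C δ ↔ (ξ < δ ∧ ξ ∉ C δ ∧ ∃ _ : Tnxt C δ ξ < δ,
      ((ξ ∈ Tset C (Tnxt C δ ξ)) ↔ ξ ≠ posn (bse C δ ξ) (Kf C (bse C δ ξ) (Tnxt C δ ξ)))) := by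
  conv_lhs => rw [Tset, WellFounded.fix_eq]
  rw [dif_pos hδ]
  rfl

lemma Tset_succ (γ : Ordinal.{0}) : Tset C (γ + 1) = Tset C γ := by
  conv_lhs => rw [Tset, WellFounded.fix_eq]
  have h1 : ¬Order.IsSuccLimit (γ+1 : Ordinal) := by
    rw [Ordinal.add_one_eq_succ]; exact Order.not_isSuccLimit_succ γ
  have h2 : ∃ γ', (γ+1:Ordinal) = γ' + 1 := ⟨γ, rfl⟩
  rw [dif_neg h1, dif_pos h2]
  have h4 := h2.choose_spec
  have h3 : h2.choose = γ := by
    have h5 : Order.succ γ = Order.succ h2.choose := by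
      rw [← Ordinal.add_one_eq_succ, ← Ordinal.add_one_eq_succ]; exact h4
    exact (Order.succ_injective h5).symm
  exact congrArg (Tset C) h3

lemma Tset_limit' {δ ξ : Ordinal.{0}} (hδ : Order.IsSuccLimit δ) (hξδ : ξ < δ) (hξC : ξ ∉ C δ)
    (hT : Tnxt C δ ξ < δ) :
    (ξ ∈ Tset C δ) ↔ ((ξ ∈ Tset C (Tnxt C δ ξ)) ↔
      ξ ≠ posn (bse C δ ξ) (Kf C (bse C δ ξ) (Tnxt C δ ξ))) := by
  rw [Tset_limit C hδ ξ]
  constructor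
  · rintro ⟨-, -, -, h⟩; exact h
  · intro h; exact ⟨hξδ, hξC, ⟨hT, h⟩⟩

def bz (β α : Ordinal.{0}) : Ordinal.{0} :=
  if (C β ∩ Iio α).Nonempty then sSup (C β ∩ Iio α) + 1 else 0

def nxr (β α : Ordinal.{0}) : Ordinal.{0} := sInf (C β \ Iio α)

section Square

variable {L : Ordinal.{0}} {C : Ordinal.{0} → Set Ordinal.{0}}
variable (hcl : ∀ α, α < L → Order.IsSuccLimit α → IsClubIn (C α) α)
variable (hcoh : ∀ α β, α < β → β < L → Order.IsSuccLimit α → Order.IsSuccLimit β →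
    sSup (C β ∩ Set.Iio α) = α → C β ∩ Set.Iio α = C α)

include hcl

lemma bz_lowbound {β α : Ordinal.{0}}
    (hη : (C β ∩ Iio α).Nonempty → sSup (C β ∩ Iio α) < α) :
    ∀ y ∈ C β, y < α → y < bz C β α := by
  intro y hy hy2
  unfold bz
  have hne : (C β ∩ Iio α).Nonempty := ⟨y, hy, hy2⟩
  rw [if_pos hne]
  have : y ≤ sSup (C β ∩ Iio α) :=
    le_csSup (bddAbove_of_subset_Iio (fun z hz => hz.2)) ⟨hy, hy2⟩
  exact lt_of_le_of_lt this (lt_add_one _)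

lemma bz_le {β α : Ordinal.{0}}
    (hη : (C β ∩ Iio α).Nonempty → sSup (C β ∩ Iio α) < α) : bz C β α ≤ α := by
  unfold bz
  split_ifs with hne
  · exact Order.add_one_le_iff.mpr (hη hne)
  · exact (zero_le : (0:Ordinal) ≤ α)

lemma interval_formula {β α : Ordinal.{0}} (hβL : β < L) (hβ : Order.IsSuccLimit β) (hαβ : α < β)
    (hη : (C β ∩ Iio α).Nonempty → sSup (C β ∩ Iio α) < α)
    {ξ : Ordinal.{0}} (hξ1 : bz C β α ≤ ξ) (hξ2 : ξ < α) :
    ξ ∈ Tset C β ↔ ((ξ ∈ Tset C (nxr C β α)) ↔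
      ξ ≠ posn (bz C β α) (Kf C (bz C β α) (nxr C β α))) := by
  obtain ⟨hne', hnx_mem, hnx_ge, hnx_lt⟩ := club_next (hcl β hβL hβ) hαβ
  have hlow := bz_lowbound (C := C) hcl hη (β := β) (α := α)
  have hCξ : ξ ∉ C β := fun hmem => absurd (hlow ξ hmem hξ2) (not_lt.mpr hξ1)
  have hset1 : C β \ Iic ξ = C β \ Iio α := by
    ext y
    simp only [Set.mem_diff, Set.mem_Iic, Set.mem_Iio, not_le, not_lt]
    constructor
    · rintro ⟨hy, hy2⟩
      refine ⟨hy, ?_⟩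
      by_contra hcon
      push_neg at hcon
      exact absurd (lt_of_lt_of_le (hlow y hy hcon) hξ1) (not_lt.mpr (le_of_lt hy2))
    · rintro ⟨hy, hy2⟩
      exact ⟨hy, lt_of_lt_of_le hξ2 hy2⟩
  have hTn_eq : Tnxt C β ξ = nxr C β α := by
    unfold Tnxt nxr
    rw [hset1]
  have hset2 : C β ∩ Iio ξ = C β ∩ Iio α := by
    ext y
    simp only [Set.mem_inter_iff, Set.mem_Iio]
    constructor
    · rintro ⟨hy, hy2⟩; exact ⟨hy, lt_trans hy2 hξ2⟩
    · rintro ⟨hy, hy2⟩; exact ⟨hy, lt_of_lt_of_le (hlow y hy hy2) hξ1⟩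
  have hbse_eq : bse C β ξ = bz C β α := by
    unfold bse bz
    rw [hset2]
  rw [Tset_limit' C hβ (lt_trans hξ2 hαβ) hCξ (hTn_eq ▸ hnx_lt), hTn_eq, hbse_eq]

include hcoh

lemma exact_below {β α : Ordinal.{0}} (hβL : β < L) (hβ : Order.IsSuccLimit β) (hα : Order.IsSuccLimit α)
    (hαβ : α < β) (hsup : sSup (C β ∩ Iio α) = α) {ξ : Ordinal.{0}} (hξ : ξ < α) :
    (ξ ∈ Tset C β ↔ ξ ∈ Tset C α) := by
  have hCC := hcoh α β hαβ hβL hα hβ hsup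
  have hαL : α < L := lt_trans hαβ hβL
  have hmem_iff : ξ ∈ C β ↔ ξ ∈ C α := by
    constructor
    · intro h; rw [← hCC]; exact ⟨h, hξ⟩
    · intro h; rw [← hCC] at h; exact h.1
  obtain ⟨y, ⟨hyC, hyα⟩, hξy⟩ :=
    exists_gt_of_sSup_eq (fun z (hz : z ∈ C β ∩ Iio α) => hz.2) hsup hξ
  have hne1 : (C β \ Iic ξ).Nonempty := ⟨y, hyC, not_le.mpr hξy⟩
  set m := Tnxt C β ξ with hm
  have hm_mem : m ∈ C β \ Iic ξ := csInf_mem hne1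
  have hm_lt : m < α := lt_of_le_of_lt (csInf_le' ⟨hyC, not_le.mpr hξy⟩) hyα
  have hTn_eq : Tnxt C α ξ = m := by
    have hmα : m ∈ C α \ Iic ξ := by
      refine ⟨?_, hm_mem.2⟩
      rw [← hCC]; exact ⟨hm_mem.1, hm_lt⟩
    refine le_antisymm (csInf_le' hmα) ?_
    refine le_csInf ⟨m, hmα⟩ ?_
    intro y' hy'
    have hy'β : y' ∈ C β \ Iic ξ := by
      refine ⟨?_, hy'.2⟩
      have : y' ∈ C β ∩ Iio α := by rw [hCC]; exact hy'.1
      exact this.1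
    exact csInf_le' hy'β
  have hbse_eq : bse C α ξ = bse C β ξ := by
    unfold bse
    have hset : C α ∩ Iio ξ = C β ∩ Iio ξ := by
      ext z
      simp only [Set.mem_inter_iff, Set.mem_Iio]
      constructor
      · rintro ⟨hz, hz2⟩
        rw [← hCC] at hz
        exact ⟨hz.1, hz2⟩
      · rintro ⟨hz, hz2⟩
        rw [← hCC]
        exact ⟨⟨hz, lt_trans hz2 hξ⟩, hz2⟩
    rw [hset]
  have hm_ltβ : m < β := lt_trans hm_lt hαβ
  by_cases hCmem : ξ ∈ C β
  · have h1 : ξ ∈ C α := hmem_iff.mp hCmem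
    have h2 : ξ ∉ Tset C β := by
      rw [Tset_limit C hβ ξ]
      rintro ⟨-, hc, -⟩
      exact hc hCmem
    have h3 : ξ ∉ Tset C α := by
      rw [Tset_limit C hα ξ]
      rintro ⟨-, hc, -⟩
      exact hc h1
    exact ⟨fun h => absurd h h2, fun h => absurd h h3⟩
  · have h1 : ξ ∉ C α := fun h => hCmem (hmem_iff.mpr h)
    rw [Tset_limit' C hβ (lt_trans hξ hαβ) hCmem (hm ▸ hm_ltβ),
        Tset_limit' C hα hξ h1 (hTn_eq ▸ hm_lt), hTn_eq, hbse_eq]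

end Square

section Coherence

variable {L : Ordinal.{0}} {C : Ordinal.{0} → Set Ordinal.{0}}
variable (hcl : ∀ α, α < L → Order.IsSuccLimit α → IsClubIn (C α) α)
variable (hcoh : ∀ α β, α < β → β < L → Order.IsSuccLimit α → Order.IsSuccLimit β →
    sSup (C β ∩ Set.Iio α) = α → C β ∩ Set.Iio α = C α)

include hcl hcoh

theorem Tcoh : ∀ β : Ordinal.{0}, β < L → ∀ α, α ≤ β →
    {ξ : Ordinal.{0} | ξ < α ∧ ¬(ξ ∈ Tset C β ↔ ξ ∈ Tset C α)}.Finite := by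
  intro β
  induction β using Ordinal.induction with
  | _ β IHout =>
  intro hβL α hα₀
  rcases eq_or_lt_of_le hα₀ with rfl | hαβ
  · apply Set.Finite.subset (Set.finite_empty)
    rintro ξ ⟨-, hdiff⟩
    exact hdiff Iff.rfl
  rcases Ordinal.zero_or_succ_or_isSuccLimit β with rfl | ⟨σ, rfl⟩ | hβlim
  · exact absurd hαβ (not_lt_of_ge (zero_le : (0:Ordinal) ≤ α))
  · -- successor case
    have hσβ : σ < Order.succ σ := Order.lt_succ σ
    have hT : Tset C (Order.succ σ) = Tset C σ := by
      rw [← Ordinal.add_one_eq_succ]; exact Tset_succ C σ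
    have hασ : α ≤ σ := Order.lt_succ_iff.mp hαβ
    have := IHout σ hσβ (lt_trans hσβ hβL) α hασ
    apply Set.Finite.subset this
    rintro ξ ⟨hξ, hdiff⟩
    exact ⟨hξ, by rwa [hT] at hdiff⟩
  -- β limit
  clear hα₀
  induction α using Ordinal.induction with
  | _ α IHin =>
  rcases Ordinal.zero_or_succ_or_isSuccLimit α with rfl | ⟨τ, rfl⟩ | hαlim
  · apply Set.Finite.subset (Set.finite_empty)
    rintro ξ ⟨hξ, -⟩
    exact absurd hξ (not_lt_of_ge (zero_le : (0:Ordinal) ≤ ξ))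
  · -- α successor
    have hτα : τ < Order.succ τ := Order.lt_succ τ
    have hT : Tset C (Order.succ τ) = Tset C τ := by
      rw [← Ordinal.add_one_eq_succ]; exact Tset_succ C τ
    have hfin := IHin τ hτα (lt_trans hτα hαβ)
    apply Set.Finite.subset (Set.Finite.union hfin (Set.finite_singleton τ))
    rintro ξ ⟨hξ, hdiff⟩
    rcases lt_or_eq_of_le (Order.lt_succ_iff.mp hξ) with h | h
    · exact Or.inl ⟨h, by rwa [hT] at hdiff⟩
    · exact Or.inr h
  -- α limit
  by_cases hsup : sSup (C β ∩ Iio α) = α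
  · apply Set.Finite.subset (Set.finite_empty)
    rintro ξ ⟨hξ, hdiff⟩
    exact hdiff (exact_below hcl hcoh hβL hβlim hαlim hαβ hsup hξ)
  · have hη : (C β ∩ Iio α).Nonempty → sSup (C β ∩ Iio α) < α := fun _ =>
      lt_of_le_of_ne (sSup_le_of_subset_Iio (fun z hz => hz.2)) hsup
    obtain ⟨hne', hν_mem, hν_ge, hν_lt⟩ := club_next (hcl β hβL hβlim) hαβ
    have hb₀α : bz C β α ≤ α := bz_le hcl hη
    have hform : ∀ {ξ : Ordinal.{0}}, bz C β α ≤ ξ → ξ < α →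
        (ξ ∈ Tset C β ↔ ((ξ ∈ Tset C (nxr C β α)) ↔
          ξ ≠ posn (bz C β α) (Kf C (bz C β α) (nxr C β α)))) :=
      fun hx1 hx2 => interval_formula hcl hβL hβlim hαβ hη hx1 hx2
    set b₀ := bz C β α with hb₀
    set ν := nxr C β α with hν
    set p₀ := posn b₀ (Kf C b₀ ν) with hp₀
    -- the three auxiliary finite sets
    have hAB : {ξ : Ordinal.{0} | ξ < b₀ ∧ ¬(ξ ∈ Tset C β ↔ ξ ∈ Tset C α)}.Finite := by
      rcases Set.eq_empty_or_nonempty (C β ∩ Iio α) with hemp | hne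
      · have : b₀ = 0 := by rw [hb₀]; unfold bz; rw [if_neg (by rw [hemp]; simp)]
        apply Set.Finite.subset (Set.finite_empty)
        rintro ξ ⟨hξ, -⟩
        rw [this] at hξ
        exact absurd hξ (not_lt_of_ge (zero_le : (0:Ordinal) ≤ ξ))
      · set η := sSup (C β ∩ Iio α) with hηdef
        have hb₀eq : b₀ = η + 1 := by rw [hb₀]; unfold bz; rw [if_pos hne]
        have hηα : η < α := hη hne
        have hfin1 := IHin η hηα (lt_trans hηα hαβ)
        have hfin2 := IHout α hαβ (lt_trans hαβ hβL) η (le_of_lt hηα)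
        apply Set.Finite.subset ((hfin1.union hfin2).union (Set.finite_singleton η))
        rintro ξ ⟨hξ, hdiff⟩
        rw [hb₀eq] at hξ
        rcases lt_or_eq_of_le (Order.lt_succ_iff.mp (by rwa [Ordinal.add_one_eq_succ] at hξ))
          with h | h
        · left
          by_cases h1 : ξ ∈ Tset C β ↔ ξ ∈ Tset C η
          · right
            refine ⟨h, fun h2 => hdiff ?_⟩
            exact h1.trans h2.symm |>.symm.symm
          · exact Or.inl ⟨h, h1⟩
        · exact Or.inr h
    have hC : {ξ : Ordinal.{0} | b₀ ≤ ξ ∧ ξ < α ∧ ξ ≠ p₀ ∧ ¬(ξ ∈ Tset C β ↔ ξ ∈ Tset C α)}.Finite := by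
      rcases eq_or_lt_of_le hν_ge with hνα | hνα
      · apply Set.Finite.subset (Set.finite_empty)
        rintro ξ ⟨hb, hξα, hnp, hdiff⟩
        have hνα' : ν = α := by rw [hν]; exact hνα.symm
        have h3 := hform hb hξα
        rw [hνα'] at h3
        apply hdiff
        rw [h3]
        simp [hnp]
      · have hfin := IHout ν hν_lt (lt_trans hν_lt hβL) α (le_of_lt hνα)
        apply Set.Finite.subset hfin
        rintro ξ ⟨hb, hξα, hnp, hdiff⟩
        refine ⟨hξα, fun h2 => hdiff ?_⟩
        have := hform hb hξα
        rw [this]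
        simp only [hnp, ne_eq, not_false_iff, iff_true]
        exact h2
    apply Set.Finite.subset ((hAB.union hC).union (Set.finite_singleton p₀))
    rintro ξ ⟨hξα, hdiff⟩
    by_cases hb : ξ < b₀
    · exact Or.inl (Or.inl ⟨hb, hdiff⟩)
    · by_cases hp : ξ = p₀
      · exact Or.inr hp
      · exact Or.inl (Or.inr ⟨not_lt.mp hb, hξα, hp, hdiff⟩)

end Coherence

section Walk

variable {L : Ordinal.{0}} {C : Ordinal.{0} → Set Ordinal.{0}}
variable (hcl : ∀ α, α < L → Order.IsSuccLimit α → IsClubIn (C α) α)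
variable (hcoh : ∀ α β, α < β → β < L → Order.IsSuccLimit α → Order.IsSuccLimit β →
    sSup (C β ∩ Set.Iio α) = α → C β ∩ Set.Iio α = C α)

include hcl hcoh

lemma bz_lt_of_limit {β α : Ordinal.{0}} (hαlim : Order.IsSuccLimit α)
    (hη : (C β ∩ Iio α).Nonempty → sSup (C β ∩ Iio α) < α) : bz C β α < α := by
  rcases lt_or_eq_of_le (bz_le hcl hη) with h | h
  · exact h
  · exfalso
    unfold bz at h
    split_ifs at h with hne
    · rw [Ordinal.add_one_eq_succ] at h
      exact Order.not_isSuccLimit_succ _ (h ▸ hαlim)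
    · exact hαlim.ne_zero h.symm

lemma Kf_step_lim {β α b' : Ordinal.{0}} (hβL : β < L) (hβlim : Order.IsSuccLimit β) (hαβ : α < β)
    (hη : (C β ∩ Iio α).Nonempty → sSup (C β ∩ Iio α) < α)
    (hb1 : bz C β α ≤ b') (hb2 : b' ≤ α) :
    Kf C b' β = Kf C b' (nxr C β α) + 1 := by
  obtain ⟨hne', hν_mem, hν_ge, hν_lt⟩ := club_next (hcl β hβL hβlim) hαβ
  have hEw : Ew C β = C β := if_pos hβlim
  apply Kf_step
  · rw [hEw]; exact hν_mem
  · exact le_trans hb2 hν_ge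
  · exact hν_lt
  · intro y hy hby
    rw [hEw] at hy
    by_cases hyα : y < α
    · exact absurd (lt_of_lt_of_le (bz_lowbound hcl hη y hy hyα) hb1) (not_lt.mpr hby)
    · exact csInf_le' ⟨hy, hyα⟩

theorem walkdiff : ∀ β : Ordinal.{0}, β < L → ∀ α b : Ordinal.{0},
    Order.IsSuccLimit α → α < β → b < α →
    (∃ b' K', b ≤ b' ∧ b' < α ∧ K' < Kf C b' β ∧
      ¬(posn b' K' ∈ Tset C β ↔ posn b' K' ∈ Tset C α))
    ∨ (∀ b' K', b ≤ b' → posn b' K' < α →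
        (posn b' K' ∈ Tset C β ↔ posn b' K' ∈ Tset C α)) := by
  intro β
  induction β using Ordinal.induction with
  | _ β IH =>
  intro hβL α b hαlim hαβ hbα
  rcases Ordinal.zero_or_succ_or_isSuccLimit β with rfl | ⟨σ, rfl⟩ | hβlim
  · exact absurd hαβ (not_lt_of_ge (zero_le : (0:Ordinal) ≤ α))
  · -- successor case
    have hσβ : σ < Order.succ σ := Order.lt_succ σ
    have hT : Tset C (Order.succ σ) = Tset C σ := by
      rw [← Ordinal.add_one_eq_succ]; exact Tset_succ C σ
    have hKs : ∀ b' : Ordinal.{0}, b' ≤ σ → Kf C b' (Order.succ σ) = Kf C b' σ + 1 := by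
      intro b' hb'
      apply Kf_step
      · have : ¬Order.IsSuccLimit (Order.succ σ) := Order.not_isSuccLimit_succ σ
        rw [Ew, if_neg this]
        show σ + 1 = Order.succ σ
        exact Ordinal.add_one_eq_succ σ
      · exact hb'
      · exact hσβ
      · intro y hy _
        have : ¬Order.IsSuccLimit (Order.succ σ) := Order.not_isSuccLimit_succ σ
        rw [Ew, if_neg this] at hy
        have hyσ : y + 1 = Order.succ σ := hy
        rw [Ordinal.add_one_eq_succ] at hyσ
        exact le_of_eq (Order.succ_injective hyσ).symm
    rcases eq_or_lt_of_le (Order.lt_succ_iff.mp hαβ) with hασ | hασ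
    · right
      intro b' K' _ _
      rw [hT, ← hασ]
    · rcases IH σ hσβ (lt_trans hσβ hβL) α b hαlim hασ hbα with hleft | hright
      · obtain ⟨b', K', h1, h2, h3, h4⟩ := hleft
        left
        refine ⟨b', K', h1, h2, ?_, by rwa [hT]⟩
        rw [hKs b' (le_of_lt (lt_trans h2 hασ))]
        omega
      · right
        intro b' K' hb' hp
        rw [hT]
        exact hright b' K' hb' hp
  · -- limit case
    by_cases hsup : sSup (C β ∩ Iio α) = α
    · right
      intro b' K' _ hp
      exact exact_below hcl hcoh hβL hβlim hαlim hαβ hsup hp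
    · have hη : (C β ∩ Iio α).Nonempty → sSup (C β ∩ Iio α) < α := fun _ =>
        lt_of_le_of_ne (sSup_le_of_subset_Iio (fun z hz => hz.2)) hsup
      obtain ⟨hne', hν_mem, hν_ge, hν_lt⟩ := club_next (hcl β hβL hβlim) hαβ
      have hb₀lt : bz C β α < α := bz_lt_of_limit hcl hcoh hαlim hη
      have hform : ∀ {ξ : Ordinal.{0}}, bz C β α ≤ ξ → ξ < α →
          (ξ ∈ Tset C β ↔ ((ξ ∈ Tset C (nxr C β α)) ↔
            ξ ≠ posn (bz C β α) (Kf C (bz C β α) (nxr C β α)))) :=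
        fun hx1 hx2 => interval_formula hcl hβL hβlim hαβ hη hx1 hx2
      set b₀ := bz C β α with hb₀def
      set ν := nxr C β α with hνdef
      set K₀ := Kf C b₀ ν with hK₀def
      set p₀ := posn b₀ K₀ with hp₀def
      have hp₀b : b₀ ≤ p₀ := le_posn _ _
      have hp₀α : p₀ < α := posn_lt hαlim hb₀lt _
      have hp₀form : p₀ ∈ Tset C β ↔ ¬(p₀ ∈ Tset C ν) := by
        have := hform hp₀b hp₀α
        simpa using this
      have hKs : ∀ b' : Ordinal.{0}, b₀ ≤ b' → b' ≤ α → Kf C b' β = Kf C b' ν + 1 :=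
        fun b' h1 h2 => Kf_step_lim hcl hcoh hβL hβlim hαβ hη h1 h2
      rcases eq_or_lt_of_le hν_ge with hνeq | hνgt
      · -- ν = α
        have hνα : ν = α := by rw [hνdef]; exact hνeq.symm
        by_cases hbb : b ≤ b₀
        · left
          refine ⟨b₀, K₀, hbb, hb₀lt, by rw [hKs b₀ le_rfl (le_of_lt hb₀lt)]; omega, ?_⟩
          rw [hνα] at hp₀form
          exact fun hc => iff_not_self (hp₀form.trans (not_congr hc).symm)
        · right
          intro b' K' hbb' hpα
          have hb₀b' : b₀ < b' := lt_of_lt_of_le (not_le.mp hbb) hbb'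
          have h3 := hform (le_trans (le_of_lt hb₀b') (le_posn _ _)) hpα
          rw [hνα] at h3
          have hne : posn b' K' ≠ p₀ := by
            intro he
            exact absurd (posn_inj he).1 (ne_of_gt hb₀b')
          rw [h3]
          simp [hne]
      · -- α < ν : recurse
        have hνL : ν < L := lt_trans hν_lt hβL
        rcases IH ν hν_lt hνL α (max b b₀) hαlim hνgt (max_lt hbα hb₀lt) with hleft | hright
        · obtain ⟨b', K', h1, h2, h3, h4⟩ := hleft
          left
          have hb₀b' : b₀ ≤ b' := le_trans (le_max_right _ _) h1
          refine ⟨b', K', le_trans (le_max_left _ _) h1, h2, ?_, ?_⟩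
          · rw [hKs b' hb₀b' (le_of_lt h2)]
            omega
          · have hp'α : posn b' K' < α := posn_lt hαlim h2 _
            have hp'b : b₀ ≤ posn b' K' := le_trans hb₀b' (le_posn _ _)
            have h5 := hform hp'b hp'α
            have hne : posn b' K' ≠ p₀ := by
              intro he
              obtain ⟨he1, he2⟩ := posn_inj he
              rw [he1, ← hK₀def] at h3
              omega
            have h7 : posn b' K' ∈ Tset C β ↔ posn b' K' ∈ Tset C ν := by
              rw [h5]
              exact ⟨fun h => h.mpr hne, fun hB => ⟨fun _ => hne, fun _ => hB⟩⟩
            exact fun hc => h4 (h7.symm.trans hc)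
        · by_cases hbb : b ≤ b₀
          · left
            have hmax : max b b₀ = b₀ := max_eq_right hbb
            refine ⟨b₀, K₀, hbb, hb₀lt, by rw [hKs b₀ le_rfl (le_of_lt hb₀lt)]; omega, ?_⟩
            have h6 := hright b₀ K₀ (le_of_eq hmax) hp₀α
            exact fun hc => iff_not_self ((hp₀form.trans (not_congr h6)).trans (not_congr hc).symm)
          · right
            intro b' K' hbb' hpα
            have hb₀b' : b₀ < b' := lt_of_lt_of_le (not_le.mp hbb) hbb'
            have h3 := hform (le_trans (le_of_lt hb₀b') (le_posn _ _)) hpα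
            have hne : posn b' K' ≠ p₀ := by
              intro he
              exact absurd (posn_inj he).1 (ne_of_gt hb₀b')
            have h6 := hright b' K' (max_le hbb' (le_of_lt hb₀b')) hpα
            rw [h3]
            simp only [hne, ne_eq, not_false_iff, iff_true]
            exact h6

end Walk

section TopDiff

variable {L : Ordinal.{0}} {C : Ordinal.{0} → Set Ordinal.{0}}
variable (hcl : ∀ α, α < L → Order.IsSuccLimit α → IsClubIn (C α) α)
variable (hcoh : ∀ α β, α < β → β < L → Order.IsSuccLimit α → Order.IsSuccLimit β →
    sSup (C β ∩ Set.Iio α) = α → C β ∩ Set.Iio α = C α)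

include hcl hcoh

theorem top_diff {β α : Ordinal.{0}} (hβL : β < L) (hβlim : Order.IsSuccLimit β) (hαlim : Order.IsSuccLimit α)
    (hαβ : α < β) (hbad : sSup (C β ∩ Iio α) ≠ α) :
    ∃ p, sSup (C β ∩ Iio α) < p ∧ p < α ∧ ¬(p ∈ Tset C β ↔ p ∈ Tset C α) := by
  have hη : (C β ∩ Iio α).Nonempty → sSup (C β ∩ Iio α) < α := fun _ =>
    lt_of_le_of_ne (sSup_le_of_subset_Iio (fun z hz => hz.2)) hbad
  obtain ⟨hne', hν_mem, hν_ge, hν_lt⟩ := club_next (hcl β hβL hβlim) hαβ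
  have hb₀lt : bz C β α < α := bz_lt_of_limit hcl hcoh hαlim hη
  have hform : ∀ {ξ : Ordinal.{0}}, bz C β α ≤ ξ → ξ < α →
      (ξ ∈ Tset C β ↔ ((ξ ∈ Tset C (nxr C β α)) ↔
        ξ ≠ posn (bz C β α) (Kf C (bz C β α) (nxr C β α)))) :=
    fun hx1 hx2 => interval_formula hcl hβL hβlim hαβ hη hx1 hx2
  set b₀ := bz C β α with hb₀def
  set ν := nxr C β α with hνdef
  set K₀ := Kf C b₀ ν with hK₀def
  set p₀ := posn b₀ K₀ with hp₀def
  have hp₀b : b₀ ≤ p₀ := le_posn _ _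
  have hp₀α : p₀ < α := posn_lt hαlim hb₀lt _
  have hp₀form : p₀ ∈ Tset C β ↔ ¬(p₀ ∈ Tset C ν) := by
    have := hform hp₀b hp₀α
    simpa using this
  have hsup_lt : ∀ p : Ordinal.{0}, b₀ ≤ p → 0 < p → sSup (C β ∩ Iio α) < p := by
    intro p h1 h2
    rcases Set.eq_empty_or_nonempty (C β ∩ Iio α) with hemp | hne
    · rw [hemp, csSup_empty, Ordinal.bot_eq_zero]
      exact h2
    · have hb₀eq : b₀ = sSup (C β ∩ Iio α) + 1 := by rw [hb₀def]; unfold bz; rw [if_pos hne]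
      calc sSup (C β ∩ Iio α) < sSup (C β ∩ Iio α) + 1 := lt_add_one _
        _ = b₀ := hb₀eq.symm
        _ ≤ p := h1
  rcases eq_or_lt_of_le hν_ge with hνeq | hνgt
  · have hνα : ν = α := by rw [hνdef]; exact hνeq.symm
    refine ⟨p₀, hsup_lt p₀ hp₀b (posn_pos _ _), hp₀α, ?_⟩
    rw [hνα] at hp₀form
    exact fun hc => iff_not_self (hp₀form.trans (not_congr hc).symm)
  · have hνL : ν < L := lt_trans hν_lt hβL
    rcases walkdiff hcl hcoh ν hνL α b₀ hαlim hνgt hb₀lt with hleft | hright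
    · obtain ⟨b', K', h1, h2, h3, h4⟩ := hleft
      have hp'α : posn b' K' < α := posn_lt hαlim h2 _
      have hp'b : b₀ ≤ posn b' K' := le_trans h1 (le_posn _ _)
      refine ⟨posn b' K', hsup_lt _ hp'b (posn_pos _ _), hp'α, ?_⟩
      have h5 := hform hp'b hp'α
      have hne : posn b' K' ≠ p₀ := by
        intro he
        obtain ⟨he1, he2⟩ := posn_inj he
        rw [he1, ← hK₀def] at h3
        omega
      have h7 : posn b' K' ∈ Tset C β ↔ posn b' K' ∈ Tset C ν := by
        rw [h5]
        exact ⟨fun h => h.mpr hne, fun hB => ⟨fun _ => hne, fun _ => hB⟩⟩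
      exact fun hc => h4 (h7.symm.trans hc)
    · refine ⟨p₀, hsup_lt p₀ hp₀b (posn_pos _ _), hp₀α, ?_⟩
      have h6 := hright b₀ K₀ le_rfl hp₀α
      exact fun hc => iff_not_self ((hp₀form.trans (not_congr h6)).trans (not_congr hc).symm)

end TopDiff

section Clubs

variable {L : Ordinal.{0}} (hLlim : Order.IsSuccLimit L) (hcof : Cardinal.aleph0 < L.cof)

include hLlim hcof

lemma omega_iSup_lt (f : ℕ → Ordinal.{0}) (h : ∀ n, f n < L) : (⨆ n, f n) < L :=
  Ordinal.iSup_lt_ord (by rw [Cardinal.mk_nat]; exact hcof) h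

lemma seq_limit (g : Ordinal.{0} → Ordinal.{0}) (hlt : ∀ y, y < L → y < g y)
    (hgL : ∀ y, y < L → g y < L) {x : Ordinal.{0}} (hx : x < L) :
    ∃ s, s < L ∧ x < s ∧ Order.IsSuccLimit s ∧ ∀ z, z < s → ∃ y, z < y ∧ y < L ∧ g y < s := by
  set seq : ℕ → Ordinal.{0} := fun n => g^[n] (x+1) with hseq
  have hsucc : ∀ n, seq (n+1) = g (seq n) := by
    intro n
    simp only [hseq, Function.iterate_succ_apply']
  have hx1L : x + 1 < L := by
    rw [Ordinal.add_one_eq_succ]; exact hLlim.succ_lt hx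
  have hseqL : ∀ n, seq n < L := by
    intro n
    induction n with
    | zero => simpa [hseq] using hx1L
    | succ m ih => rw [hsucc]; exact hgL _ ih
  have hmono : ∀ n, seq n < seq (n+1) := fun n => by
    rw [hsucc]; exact hlt _ (hseqL n)
  have hmono' : ∀ n m, n ≤ m → seq n ≤ seq m := fun n m h =>
    monotone_nat_of_le_succ (fun k => le_of_lt (hmono k)) h
  set s := ⨆ n, seq n with hs
  have hsL : s < L := omega_iSup_lt hLlim hcof seq hseqL
  have hle : ∀ n, seq n ≤ s := fun n => Ordinal.le_iSup seq n
  have hlts : ∀ n, seq n < s := fun n => lt_of_lt_of_le (hmono n) (hle (n+1))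
  have hxs : x < s := lt_of_lt_of_le (lt_add_one x) (by simpa [hseq] using hle 0)
  have hexists : ∀ z, z < s → ∃ n, z < seq n := by
    intro z hz
    rw [hs, Ordinal.lt_iSup_iff] at hz
    exact hz
  refine ⟨s, hsL, hxs, Ordinal.isSuccLimit_iff.mpr ⟨?_, Order.isSuccPrelimit_of_succ_lt ?_⟩, ?_⟩
  · intro h0
    rw [h0] at hxs
    exact absurd hxs (not_lt_of_ge (zero_le : (0:Ordinal) ≤ x))
  · intro b hb
    obtain ⟨n, hn⟩ := hexists b hb
    have : Order.succ b ≤ seq n := Order.succ_le_of_lt hn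
    exact lt_of_le_of_lt this (hlts n)
  · intro z hz
    obtain ⟨n, hn⟩ := hexists z hz
    refine ⟨seq n, hn, hseqL n, ?_⟩
    rw [← hsucc]
    exact hlts (n+1)

lemma club_point {D : Set Ordinal.{0}} (hD : IsClubIn D L) {x : Ordinal.{0}} (hx : x < L) :
    ∃ s, s ∈ D ∧ x < s ∧ s < L ∧ Order.IsSuccLimit s := by
  set g : Ordinal.{0} → Ordinal.{0} := fun y => sInf (D \ Iio (y+1)) with hg
  have hy1L : ∀ y : Ordinal.{0}, y < L → y + 1 < L := fun y hy => by
    rw [Ordinal.add_one_eq_succ]; exact hLlim.succ_lt hy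
  have hgspec : ∀ y, y < L → g y ∈ D ∧ y < g y ∧ g y < L := by
    intro y hy
    obtain ⟨h1, h2, h3, h4⟩ := club_next hD (hy1L y hy)
    exact ⟨h2, lt_of_lt_of_le (lt_add_one y) h3, h4⟩
  obtain ⟨s, hsL, hxs, hslim, hcof'⟩ := seq_limit hLlim hcof g
    (fun y hy => (hgspec y hy).2.1) (fun y hy => (hgspec y hy).2.2) hx
  refine ⟨s, ?_, hxs, hsL, hslim⟩
  apply hD.2.1 s hsL hslim.pos
  apply sSup_eq_of_cofinal (fun z hz => hz.2)
  intro z hz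
  obtain ⟨y, hzy, hyL, hgys⟩ := hcof' z hz
  exact ⟨g y, ⟨(hgspec y hyL).1, hgys⟩, lt_trans hzy (hgspec y hyL).2.1⟩

lemma stat_limits : IsStationaryIn {β : Ordinal.{0} | β < L ∧ Order.IsSuccLimit β} L := by
  refine ⟨fun β hβ => hβ.1, ?_⟩
  intro D hD
  obtain ⟨s, hsD, _, hsL, hslim⟩ := club_point hLlim hcof hD hLlim.pos
  exact ⟨s, ⟨hsL, hslim⟩, hsD⟩

omit hLlim hcof in
lemma club_Iio : IsClubIn (Iio L) L :=
  ⟨fun _ h => h, fun α hα _ _ => hα, fun α hα => ⟨α, hα, le_rfl⟩⟩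

omit hcof in
lemma club_tail {x : Ordinal.{0}} (hx : x < L) : IsClubIn {y | x < y ∧ y < L} L := by
  refine ⟨fun y hy => hy.2, ?_, ?_⟩
  · intro α hα hpos hsup
    obtain ⟨y, hy, h0y⟩ := exists_gt_of_sSup_eq (fun z hz => hz.2) hsup hpos
    exact ⟨lt_trans hy.1.1 hy.2, hα⟩
  · intro α hα
    have hx1L : x + 1 < L := by rw [Ordinal.add_one_eq_succ]; exact hLlim.succ_lt hx
    refine ⟨max α (x+1), ⟨lt_of_lt_of_le (lt_add_one x) (le_max_right _ _), max_lt hα hx1L⟩,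
      le_max_left _ _⟩

lemma club_inter {D₁ D₂ : Set Ordinal.{0}} (h1 : IsClubIn D₁ L) (h2 : IsClubIn D₂ L) :
    IsClubIn (D₁ ∩ D₂) L := by
  have hy1L : ∀ y : Ordinal.{0}, y < L → y + 1 < L := fun y hy => by
    rw [Ordinal.add_one_eq_succ]; exact hLlim.succ_lt hy
  refine ⟨fun y hy => h1.1 hy.1, ?_, ?_⟩
  · intro α hα hpos hsup
    have hsub : (D₁ ∩ D₂) ∩ Iio α ⊆ Iio α := fun z hz => hz.2
    constructor
    · apply h1.2.1 α hα hpos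
      apply sSup_eq_of_cofinal (fun z hz => hz.2)
      intro z hz
      obtain ⟨y, hy, hzy⟩ := exists_gt_of_sSup_eq hsub hsup hz
      exact ⟨y, ⟨hy.1.1, hy.2⟩, hzy⟩
    · apply h2.2.1 α hα hpos
      apply sSup_eq_of_cofinal (fun z hz => hz.2)
      intro z hz
      obtain ⟨y, hy, hzy⟩ := exists_gt_of_sSup_eq hsub hsup hz
      exact ⟨y, ⟨hy.1.2, hy.2⟩, hzy⟩
  · intro α hα
    set g : Ordinal.{0} → Ordinal.{0} := fun y =>
      sInf (D₂ \ Iio (sInf (D₁ \ Iio (y+1)) + 1)) with hg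
    have hgspec : ∀ y, y < L → y < g y ∧ g y < L ∧ g y ∈ D₂ ∧
        ∃ w ∈ D₁, y < w ∧ w ≤ g y := by
      intro y hy
      obtain ⟨h1a, h1b, h1c, h1d⟩ := club_next h1 (hy1L y hy)
      set d1 := sInf (D₁ \ Iio (y+1)) with hd1
      obtain ⟨h2a, h2b, h2c, h2d⟩ := club_next h2 (hy1L d1 h1d)
      have hgy : g y = sInf (D₂ \ Iio (d1 + 1)) := rfl
      have hyd1 : y < d1 := lt_of_lt_of_le (lt_add_one y) h1c
      have hd1g : d1 < g y := by
        rw [hgy]; exact lt_of_lt_of_le (lt_add_one d1) h2c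
      exact ⟨lt_trans hyd1 hd1g, by rw [hgy]; exact h2d, by rw [hgy]; exact h2b,
        ⟨d1, h1b, hyd1, le_of_lt hd1g⟩⟩
    obtain ⟨s, hsL, hxs, hslim, hcof'⟩ := seq_limit hLlim hcof g
      (fun y hy => (hgspec y hy).1) (fun y hy => (hgspec y hy).2.1) hα
    refine ⟨s, ⟨?_, ?_⟩, le_of_lt hxs⟩
    · apply h1.2.1 s hsL hslim.pos
      apply sSup_eq_of_cofinal (fun z hz => hz.2)
      intro z hz
      obtain ⟨y, hzy, hyL, hgys⟩ := hcof' z hz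
      obtain ⟨w, hw, hyw, hwg⟩ := (hgspec y hyL).2.2.2
      exact ⟨w, ⟨hw, lt_of_le_of_lt hwg hgys⟩, lt_trans hzy hyw⟩
    · apply h2.2.1 s hsL hslim.pos
      apply sSup_eq_of_cofinal (fun z hz => hz.2)
      intro z hz
      obtain ⟨y, hzy, hyL, hgys⟩ := hcof' z hz
      exact ⟨g y, ⟨(hgspec y hyL).2.2.1, hgys⟩, lt_trans hzy (hgspec y hyL).1⟩

lemma stat_inter_club {S D : Set Ordinal.{0}} (hS : IsStationaryIn S L) (hD : IsClubIn D L) :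
    IsStationaryIn (S ∩ D) L := by
  refine ⟨fun y hy => hS.1 hy.1, ?_⟩
  intro D' hD'
  obtain ⟨β, hβS, hβ⟩ := hS.2 (D ∩ D') (club_inter hLlim hcof hD hD')
  exact ⟨β, ⟨hβS, hβ.1⟩, hβ.2⟩

lemma fodor (hcard : ∀ x, x < L → x.card < L.cof)
    {S : Set Ordinal.{0}} (hS : IsStationaryIn S L) (F : Ordinal.{0} → Ordinal.{0})
    (hF : ∀ β ∈ S, F β < β) :
    ∃ ν, ν < L ∧ IsStationaryIn (S ∩ {β | F β ≤ ν}) L := by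
  by_contra hcon
  push_neg at hcon
  have hchoice : ∀ ν : Ordinal.{0}, ∃ D, IsClubIn D L ∧
      (ν < L → (S ∩ {β | F β ≤ ν}) ∩ D = ∅) := by
    intro ν
    by_cases hν : ν < L
    · have hns := hcon ν hν
      unfold IsStationaryIn at hns
      push_neg at hns
      rcases hns (fun y hy => hS.1 hy.1) with ⟨D, hD, hemp⟩
      exact ⟨D, hD, fun _ => hemp⟩
    · exact ⟨Iio L, club_Iio, fun h => absurd h hν⟩
  choose Dfam hclub hempty using hchoice
  have hy1L : ∀ y : Ordinal.{0}, y < L → y + 1 < L := fun y hy => by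
    rw [Ordinal.add_one_eq_succ]; exact hLlim.succ_lt hy
  set Δ : Set Ordinal.{0} := {β | β < L ∧ ∀ ν, ν < β → β ∈ Dfam ν} with hΔ
  have hΔclub : IsClubIn Δ L := by
    refine ⟨fun β hβ => hβ.1, ?_, ?_⟩
    · intro α hα hpos hsup
      refine ⟨hα, fun ν hνα => ?_⟩
      apply (hclub ν).2.1 α hα hpos
      apply sSup_eq_of_cofinal (fun z hz => hz.2)
      intro z hz
      obtain ⟨y, hy, hmaxy⟩ := exists_gt_of_sSup_eq (fun w hw => hw.2) hsup
        (max_lt hz hνα)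
      exact ⟨y, ⟨hy.1.2 ν (lt_of_le_of_lt (le_max_right _ _) hmaxy), hy.2⟩,
        lt_of_le_of_lt (le_max_left _ _) hmaxy⟩
    · intro α hα
      set g : Ordinal.{0} → Ordinal.{0} := fun y =>
        max (y+1) (⨆ i : y.ToType, sInf (Dfam (((Ordinal.ToType.mk (o := y)).symm i : Iio y) : Ordinal) \ Iio (y+1))) with hg
      have hkey : ∀ y, y < L → (y < g y ∧ g y < L) ∧
          ∀ ν, ν < y → ∃ w ∈ Dfam ν, y < w ∧ w ≤ g y := by
        intro y hy
        have hgy : g y = max (y+1) (⨆ i : y.ToType,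
            sInf (Dfam (((Ordinal.ToType.mk (o := y)).symm i : Iio y) : Ordinal) \ Iio (y+1))) := rfl
        constructor
        · constructor
          · rw [hgy]; exact lt_of_lt_of_le (lt_add_one y) (le_max_left _ _)
          · rw [hgy]
            apply max_lt (hy1L y hy)
            apply Ordinal.iSup_lt_ord
            · rw [Cardinal.mk_toType]; exact hcard y hy
            · intro i
              exact (club_next (hclub _) (hy1L y hy)).2.2.2
        · intro ν hν
          set i₀ := Ordinal.ToType.mk (o := y) ⟨ν, hν⟩ with hi₀
          have heq : (((Ordinal.ToType.mk (o := y)).symm i₀ : Iio y) : Ordinal) = ν := by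
            rw [hi₀, OrderIso.symm_apply_apply]
          obtain ⟨ha, hb, hc, hd⟩ := club_next (hclub ν) (hy1L y hy)
          refine ⟨sInf (Dfam ν \ Iio (y+1)), hb, lt_of_lt_of_le (lt_add_one y) hc, ?_⟩
          have hle := Ordinal.le_iSup (fun i : y.ToType =>
            sInf (Dfam (((Ordinal.ToType.mk (o := y)).symm i : Iio y) : Ordinal) \ Iio (y+1))) i₀
          rw [heq] at hle
          rw [hgy]
          exact le_trans hle (le_max_right _ _)
      obtain ⟨s, hsL, hαs, hslim, hcof'⟩ := seq_limit hLlim hcof g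
        (fun y hy => ((hkey y hy).1).1) (fun y hy => ((hkey y hy).1).2) hα
      refine ⟨s, ⟨hsL, ?_⟩, le_of_lt hαs⟩
      intro ν hνs
      apply (hclub ν).2.1 s hsL hslim.pos
      apply sSup_eq_of_cofinal (fun z hz => hz.2)
      intro z hz
      obtain ⟨y, hy1, hy2, hy3⟩ := hcof' (max z ν) (max_lt hz hνs)
      obtain ⟨w, hw1, hw2, hw3⟩ := (hkey y hy2).2 ν (lt_of_le_of_lt (le_max_right _ _) hy1)
      exact ⟨w, ⟨hw1, lt_of_le_of_lt hw3 hy3⟩,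
        lt_of_le_of_lt (le_max_left _ _) (lt_trans hy1 hw2)⟩
  obtain ⟨β, hβS, hβΔ⟩ := hS.2 Δ hΔclub
  have hFβ : F β < β := hF β hβS
  have hmem : β ∈ Dfam (F β) := hβΔ.2 (F β) hFβ
  have := hempty (F β) (lt_trans hFβ hβΔ.1)
  rw [Set.eq_empty_iff_forall_notMem] at this
  exact this β ⟨⟨hβS, show F β ≤ F β from le_rfl⟩, hmem⟩

end Clubs

end Sq18

open Sq18

/-- Theorem (Todorcevic): if `λ` is a regular uncountable cardinal and `□(λ)` holds, then
for every nontrivial abelian group `A` there is a nontrivial coherent family of `A`-valued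
functions of height `λ`. -/
theorem statement18 (lam : Cardinal) (hreg : lam.IsRegular) (hunc : Cardinal.aleph0 < lam)
    (hsq : ∃ C : Ordinal → Set Ordinal, IsSquareSeq lam.ord C)
    (A : Type*) [AddCommGroup A] (hA : ∃ a : A, a ≠ 0) :
    ∃ Φ : Ordinal → Ordinal → A, CoherentFam lam.ord Φ ∧ ¬TrivialFam lam.ord Φ := by

  classical
  obtain ⟨C, hcl, hcoh, hnthread⟩ := hsq
  obtain ⟨a, ha⟩ := hA
  set L := lam.ord with hLdef
  have hLlim : Order.IsSuccLimit L := Cardinal.isSuccLimit_ord hreg.aleph0_le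
  have hcofL : L.cof = lam := hreg.cof_eq
  have hcof : Cardinal.aleph0 < L.cof := by rw [hcofL]; exact hunc
  have hcard : ∀ x : Ordinal.{0}, x < L → x.card < L.cof := fun x hx => by
    rw [hcofL]; exact Cardinal.lt_ord.mp hx
  refine ⟨fun β ξ => if ξ ∈ Tset C β then a else 0, ?_, ?_⟩
  · -- coherence
    intro β γ hβγ hγL
    have hfin := Tcoh hcl hcoh γ hγL β hβγ
    apply hfin.subset
    rintro ξ ⟨h1, h2⟩
    refine ⟨h1, fun hiff => h2 ?_⟩
    show (if ξ ∈ Tset C γ then a else 0) = (if ξ ∈ Tset C β then a else 0)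
    by_cases hξ : ξ ∈ Tset C β
    · rw [if_pos hξ, if_pos (hiff.mpr hξ)]
    · rw [if_neg hξ, if_neg (fun hh => hξ (hiff.mp hh))]
  · -- nontriviality
    rintro ⟨f, hf⟩
    set X : Set Ordinal.{0} := {ξ | f ξ = a} with hX
    set err : Ordinal.{0} → Set Ordinal.{0} :=
      fun β => {ξ | ξ < β ∧ ¬(ξ ∈ X ↔ ξ ∈ Tset C β)} with herrdef
    have herr : ∀ β, β < L → (err β).Finite := by
      intro β hβ
      apply (hf β hβ).subset
      rintro ξ ⟨hξβ, hdiff⟩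
      refine ⟨hξβ, fun heq => hdiff ?_⟩
      have heq' : f ξ = (if ξ ∈ Tset C β then a else 0) := heq
      by_cases hξ : ξ ∈ Tset C β
      · rw [if_pos hξ] at heq' 
        exact ⟨fun _ => hξ, fun _ => heq'⟩
      · rw [if_neg hξ] at heq'
        exact ⟨fun hxX => absurd (hxX.symm.trans heq') ha, fun hT => absurd hT hξ⟩
    set h1 : Ordinal.{0} → Ordinal.{0} := fun β => sSup (err β) with hh1
    have hreg1 : ∀ β ∈ {β : Ordinal.{0} | β < L ∧ Order.IsSuccLimit β}, h1 β < β := by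
      rintro β ⟨hβL, hβlim⟩
      rcases Set.eq_empty_or_nonempty (err β) with hemp | hne
      · rw [hh1]
        simp only [hemp, csSup_empty, Ordinal.bot_eq_zero]
        exact hβlim.pos
      · have := (hne.csSup_mem (herr β hβL)).1
        exact this
    obtain ⟨μ, hμL, hS₁⟩ := fodor hLlim hcof hcard (stat_limits hLlim hcof) h1 hreg1
    have herr_bdd : ∀ β, β < L → h1 β ≤ μ → ∀ ξ ∈ err β, ξ ≤ μ := by
      intro β hβL hle ξ hξ
      exact le_trans (le_csSup ((herr β hβL).bddAbove) hξ) hle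
    set S₁' := ({β : Ordinal.{0} | β < L ∧ Order.IsSuccLimit β} ∩ {β | h1 β ≤ μ}) ∩ {y | μ < y ∧ y < L}
      with hS₁'def
    have hS₁'stat : IsStationaryIn S₁' L :=
      stat_inter_club hLlim hcof hS₁ (club_tail hLlim hμL)
    set F₂ : Ordinal.{0} → Ordinal.{0} := fun β => sInf (C β \ Iio (μ+1)) with hF₂
    have hreg2 : ∀ β ∈ S₁', F₂ β < β := by
      rintro β ⟨⟨⟨hβL, hβlim⟩, -⟩, ⟨hμβ, -⟩⟩
      have hμ1β : μ + 1 < β := by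
        rw [Ordinal.add_one_eq_succ]; exact hβlim.succ_lt hμβ
      exact (club_next (hcl β hβL hβlim) hμ1β).2.2.2
    obtain ⟨ν, hνL, hS₂⟩ := fodor hLlim hcof hcard hS₁'stat F₂ hreg2
    set R := (S₁' ∩ {β | F₂ β ≤ ν}) ∩ {y | ν < y ∧ y < L} with hRdef
    have hRstat : IsStationaryIn R L :=
      stat_inter_club hLlim hcof hS₂ (club_tail hLlim hνL)
    have hRfacts : ∀ β ∈ R, β < L ∧ Order.IsSuccLimit β ∧ h1 β ≤ μ ∧ μ < β ∧ F₂ β ≤ ν ∧ ν < β := by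
      rintro β ⟨⟨⟨⟨⟨hβL, hβlim⟩, hh⟩, ⟨hμβ, -⟩⟩, hF⟩, ⟨hνβ, -⟩⟩
      exact ⟨hβL, hβlim, hh, hμβ, hF, hνβ⟩
    have hRunb : ∀ x, x < L → ∃ β ∈ R, x < β := by
      intro x hx
      obtain ⟨β, hβR, hβtail⟩ := hRstat.2 _ (club_tail hLlim hx)
      exact ⟨β, hβR, hβtail.1⟩
    -- all pairs from R are "good"
    have hgood : ∀ α β, α ∈ R → β ∈ R → α < β → C β ∩ Iio α = C α := by
      intro α β hαR hβR hαβ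
      obtain ⟨hαL, hαlim, hα1, hα2, hα3, hα4⟩ := hRfacts α hαR
      obtain ⟨hβL, hβlim, hβ1, hβ2, hβ3, hβ4⟩ := hRfacts β hβR
      suffices hsup : sSup (C β ∩ Iio α) = α by
        exact hcoh α β hαβ hβL hαlim hβlim hsup
      by_contra hbad
      obtain ⟨p, hp1, hp2, hp3⟩ := top_diff hcl hcoh hβL hβlim hαlim hαβ hbad
      have hpμ : p ≤ μ := by
        by_cases hXβ : p ∈ X ↔ p ∈ Tset C β
        · -- then p differs at α
          have : p ∈ err α := ⟨hp2, fun hXα => hp3 (hXβ.symm.trans hXα)⟩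
          exact herr_bdd α hαL hα1 p this
        · have : p ∈ err β := ⟨lt_trans hp2 hαβ, hXβ⟩
          exact herr_bdd β hβL hβ1 p this
      have hμ1β : μ + 1 < β := by
        rw [Ordinal.add_one_eq_succ]; exact hβlim.succ_lt hβ2
      obtain ⟨hn1, hn2, hn3, hn4⟩ := club_next (hcl β hβL hβlim) hμ1β
      set z := sInf (C β \ Iio (μ+1)) with hz
      have hzν : z ≤ ν := hβ3
      have hzα : z < α := lt_of_le_of_lt hzν hα4
      have hzsup : z ≤ sSup (C β ∩ Iio α) :=
        le_csSup (bddAbove_of_subset_Iio (fun w hw => hw.2)) ⟨hn2, hzα⟩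
      have : sSup (C β ∩ Iio α) < z :=
        lt_of_lt_of_le hp1 (le_trans hpμ (le_trans (le_of_lt (lt_add_one μ)) hn3))
      exact absurd hzsup (not_le.mpr this)
    -- build the thread
    set D : Set Ordinal.{0} := {x | ∃ β, β ∈ R ∧ x ∈ C β} with hD
    have htrace : ∀ x β, β ∈ R → x ≤ β → D ∩ Iio x = C β ∩ Iio x := by
      intro x β hβR hxβ
      apply Set.eq_of_subset_of_subset
      · rintro y ⟨⟨β', hβ'R, hyC⟩, hyx⟩
        rcases lt_trichotomy β' β with hlt | heq | hgt
        · have := hgood β' β hβ'R hβR hlt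
          rw [← this] at hyC
          exact ⟨hyC.1, hyx⟩
        · rw [heq] at hyC
          exact ⟨hyC, hyx⟩
        · have := hgood β β' hβR hβ'R hgt
          have hyβ : y < β := lt_of_lt_of_le hyx hxβ
          have : y ∈ C β := by
            rw [← this]
            exact ⟨hyC, hyβ⟩
          exact ⟨this, hyx⟩
      · rintro y ⟨hyC, hyx⟩
        exact ⟨⟨β, hβR, hyC⟩, hyx⟩
    have hDclub : IsClubIn D L := by
      refine ⟨?_, ?_, ?_⟩
      · rintro x ⟨β, hβR, hxC⟩
        obtain ⟨hβL, hβlim, -⟩ := hRfacts β hβR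
        exact lt_trans ((hcl β hβL hβlim).1 hxC) hβL
      · intro α hαL hpos hsup
        obtain ⟨β, hβR, hαβ⟩ := hRunb α hαL
        obtain ⟨hβL, hβlim, -⟩ := hRfacts β hβR
        rw [htrace α β hβR (le_of_lt hαβ)] at hsup
        exact ⟨β, hβR, (hcl β hβL hβlim).2.1 α hαβ hpos hsup⟩
      · intro x hx
        obtain ⟨β, hβR, hxβ⟩ := hRunb x hx
        obtain ⟨hβL, hβlim, -⟩ := hRfacts β hβR
        obtain ⟨y, hyC, hxy⟩ := (hcl β hβL hβlim).2.2 x hxβ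
        exact ⟨y, ⟨β, hβR, hyC⟩, hxy⟩
    apply hnthread
    refine ⟨D, hDclub, ?_⟩
    intro α hαL hαlim hsup
    obtain ⟨β, hβR, hαβ⟩ := hRunb α hαL
    obtain ⟨hβL, hβlim, -⟩ := hRfacts β hβR
    rw [htrace α β hβR (le_of_lt hαβ)] at hsup ⊢
    exact hcoh α β hαβ hβL hαlim hβlim hsup
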